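/- Let X be a separable Banach space, Y a Banach space, G ⊂ X closed, and f : X → Y with ‖f(x)−f(y)‖ ≤ L‖x−y‖ whenever y ∈ G, ‖x−y‖ < δ. Let x ∈ G be a point where the distance function d_G is Gâteaux differentiable, and let 0 ≠ v ∈ X, K := O(f,x,v) > 0. If φ : ℝ → X satisfies φ(r) = x and t ↦ φ(t) − tv has Lipschitz constant strictly less than K/(8L), then O(f∘φ, r, 1) ≥ K/4 > 0; in particular f∘φ is not differentiable at r. -/

import Mathlib

open Metric Topology Filter
open scoped ENNReal NNReal

/-- The oscillation `O(f,x,v)` of Preiss–Zajíček, computed in `ℝ≥0∞`. -/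
noncomputable def oscDir {X Y : Type*} [NormedAddCommGroup X] [NormedSpace ℝ X]
    [NormedAddCommGroup Y] [NormedSpace ℝ Y] (f : X → Y) (x v : X) : ℝ≥0∞ :=
  ⨅ (ε : ℝ) (_ : 0 < ε),
    ⨆ (t : ℝ) (s : ℝ) (_ : 0 < |t| ∧ |t| < ε ∧ 0 < |s| ∧ |s| < ε),
      (‖t⁻¹ • (f (x + t • v) - f x) - s⁻¹ • (f (x + s • v) - f x)‖₊ : ℝ≥0∞)

/-- `g : X → ℝ` is Gâteaux differentiable at `x`. -/
def GateauxDiffAt {X : Type*} [NormedAddCommGroup X] [NormedSpace ℝ X]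
    (g : X → ℝ) (x : X) : Prop :=
  ∃ T : X →L[ℝ] ℝ, ∀ u : X,
    Tendsto (fun t : ℝ => t⁻¹ * (g (x + t • u) - g x)) (𝓝[≠] 0) (𝓝 (T u))

/-- The inner supremum appearing in `oscDir`. -/
noncomputable def oscSup {X Y : Type*} [NormedAddCommGroup X] [NormedSpace ℝ X]
    [NormedAddCommGroup Y] [NormedSpace ℝ Y] (f : X → Y) (x v : X) (ε : ℝ) : ℝ≥0∞ :=
  ⨆ (t : ℝ) (s : ℝ) (_ : 0 < |t| ∧ |t| < ε ∧ 0 < |s| ∧ |s| < ε),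
    (‖t⁻¹ • (f (x + t • v) - f x) - s⁻¹ • (f (x + s • v) - f x)‖₊ : ℝ≥0∞)

lemma oscDir_eq_iInf {X Y : Type*} [NormedAddCommGroup X] [NormedSpace ℝ X]
    [NormedAddCommGroup Y] [NormedSpace ℝ Y] (f : X → Y) (x v : X) :
    oscDir f x v = ⨅ (ε : ℝ) (_ : 0 < ε), oscSup f x v ε := rfl

lemma oscDir_le_oscSup {X Y : Type*} [NormedAddCommGroup X] [NormedSpace ℝ X]
    [NormedAddCommGroup Y] [NormedSpace ℝ Y] (f : X → Y) (x v : X) {ε : ℝ} (hε : 0 < ε) :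
    oscDir f x v ≤ oscSup f x v ε := by
  rw [oscDir_eq_iInf]; exact iInf₂_le ε hε

lemma oscSup_le {X Y : Type*} [NormedAddCommGroup X] [NormedSpace ℝ X]
    [NormedAddCommGroup Y] [NormedSpace ℝ Y] (f : X → Y) (x v : X) {ε : ℝ} {C : ℝ≥0∞}
    (h : ∀ t s : ℝ, 0 < |t| → |t| < ε → 0 < |s| → |s| < ε →
      (‖t⁻¹ • (f (x + t • v) - f x) - s⁻¹ • (f (x + s • v) - f x)‖₊ : ℝ≥0∞) ≤ C) :
    oscSup f x v ε ≤ C := by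
  refine iSup_le fun t => iSup_le fun s => iSup_le fun ht => ?_
  exact h t s ht.1 ht.2.1 ht.2.2.1 ht.2.2.2

lemma le_oscSup {X Y : Type*} [NormedAddCommGroup X] [NormedSpace ℝ X]
    [NormedAddCommGroup Y] [NormedSpace ℝ Y] (f : X → Y) (x v : X) {ε t s : ℝ}
    (ht : 0 < |t|) (ht' : |t| < ε) (hs : 0 < |s|) (hs' : |s| < ε) :
    (‖t⁻¹ • (f (x + t • v) - f x) - s⁻¹ • (f (x + s • v) - f x)‖₊ : ℝ≥0∞) ≤ oscSup f x v ε := by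
  refine le_trans ?_ (le_iSup _ t)
  refine le_trans ?_ (le_iSup _ s)
  exact le_iSup (fun _ : 0 < |t| ∧ |t| < ε ∧ 0 < |s| ∧ |s| < ε => _) ⟨ht, ht', hs, hs'⟩

lemma oscSup_mono {X Y : Type*} [NormedAddCommGroup X] [NormedSpace ℝ X]
    [NormedAddCommGroup Y] [NormedSpace ℝ Y] (f : X → Y) (x v : X) {ε ε' : ℝ}
    (h : ε ≤ ε') : oscSup f x v ε ≤ oscSup f x v ε' := by
  refine oscSup_le f x v fun t s ht ht' hs hs' => ?_
  exact le_oscSup f x v ht (lt_of_lt_of_le ht' h) hs (lt_of_lt_of_le hs' h)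

/-- If `g : ℝ → Y` is differentiable at `r`, its oscillation there vanishes. -/
lemma oscDir_eq_zero_of_differentiableAt {Y : Type*} [NormedAddCommGroup Y] [NormedSpace ℝ Y]
    {g : ℝ → Y} {r : ℝ} (hg : DifferentiableAt ℝ g r) : oscDir g r 1 = 0 := by
  obtain ⟨d, hd⟩ : ∃ d, HasDerivAt g d r := ⟨_, hg.hasDerivAt⟩
  rw [hasDerivAt_iff_tendsto_slope] at hd
  have htr : Tendsto (fun t : ℝ => r + t) (𝓝[≠] 0) (𝓝[≠] r) := by
    refine tendsto_nhdsWithin_of_tendsto_nhds_of_eventually_within _ ?_ ?_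
    · simpa using (continuous_add_left r).tendsto' 0 r (by simp) |>.mono_left
        nhdsWithin_le_nhds
    · filter_upwards [eventually_mem_nhdsWithin] with t ht
      simp only [Set.mem_compl_iff, Set.mem_singleton_iff] at ht ⊢
      intro h; exact ht (by linarith)
  have hQ : Tendsto (fun t : ℝ => t⁻¹ • (g (r + t • (1:ℝ)) - g r)) (𝓝[≠] 0) (𝓝 d) := by
    have := hd.comp htr
    refine this.congr fun t => ?_
    simp [slope, smul_eq_mul, vsub_eq_sub]
  refine le_antisymm (ENNReal.le_of_forall_pos_le_add fun η hη _ => ?_) zero_le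
  rw [Metric.tendsto_nhdsWithin_nhds] at hQ
  obtain ⟨ε, hε, hQε⟩ := hQ (η / 2) (by positivity)
  refine le_trans (oscDir_le_oscSup g r 1 hε) ?_
  rw [zero_add]
  refine oscSup_le g r 1 fun t s ht ht' hs hs' => ?_
  have h1 := hQε (x := t) (by simpa using abs_pos.mp ht) (by simpa [Real.dist_eq] using ht')
  have h2 := hQε (x := s) (by simpa using abs_pos.mp hs) (by simpa [Real.dist_eq] using hs')
  rw [← ((ofReal_norm _).trans (enorm_eq_nnnorm _)), ← ENNReal.ofReal_coe_nnreal]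
  refine ENNReal.ofReal_le_ofReal ?_
  have htri := dist_triangle (t⁻¹ • (g (r + t • (1:ℝ)) - g r)) d (s⁻¹ • (g (r + s • (1:ℝ)) - g r))
  rw [dist_eq_norm] at htri
  rw [dist_comm] at h2
  calc ‖_ - _‖ ≤ _ := htri
    _ ≤ η / 2 + η / 2 := add_le_add h1.le h2.le
    _ = (η : ℝ) := by ring

theorem comp_not_differentiable_of_osc_pos
    {X Y : Type*} [NormedAddCommGroup X] [NormedSpace ℝ X] [CompleteSpace X]
    [TopologicalSpace.SeparableSpace X]
    [NormedAddCommGroup Y] [NormedSpace ℝ Y] [CompleteSpace Y]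
    (G : Set X) (hG : IsClosed G) (f : X → Y) (L δ : ℝ) (hL : 0 < L) (hδ : 0 < δ)
    (hf : ∀ y ∈ G, ∀ x : X, ‖x - y‖ < δ → ‖f x - f y‖ ≤ L * ‖x - y‖)
    (x : X) (hx : x ∈ G) (hd : GateauxDiffAt (fun z => Metric.infDist z G) x)
    (v : X) (hv : v ≠ 0) (hK : 0 < oscDir f x v)
    (φ : ℝ → X) (r : ℝ) (hr : φ r = x)
    (hlip : ∃ c : ℝ≥0, (c : ℝ≥0∞) < oscDir f x v / (8 * ENNReal.ofReal L) ∧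
      LipschitzWith c (fun t : ℝ => φ t - t • v)) :
    oscDir f x v / 4 ≤ oscDir (f ∘ φ) r 1 ∧ ¬ DifferentiableAt ℝ (f ∘ φ) r := by
  obtain ⟨c, hc, hlipc⟩ := hlip
  have hGne : G.Nonempty := ⟨x, hx⟩
  -- Step 1 : the directional derivative of the distance function vanishes
  have hsmall : Tendsto (fun t : ℝ => t⁻¹ * Metric.infDist (x + t • v) G) (𝓝[≠] 0) (𝓝 0) := by
    obtain ⟨T, hT⟩ := hd
    have hdx : Metric.infDist x G = 0 := Metric.infDist_zero_of_mem hx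
    have h := hT v
    simp only [hdx, sub_zero] at h
    have hTv : T v = 0 := by
      have hpos : (0:ℝ) ≤ T v := by
        have h1 : Tendsto (fun t : ℝ => t⁻¹ * Metric.infDist (x + t • v) G) (𝓝[>] 0) (𝓝 (T v)) :=
          h.mono_left (nhdsWithin_mono _ fun t ht => ne_of_gt ht)
        refine ge_of_tendsto h1 ?_
        filter_upwards [self_mem_nhdsWithin] with t ht
        have h2 : (0:ℝ) ≤ Metric.infDist (x + t • v) G := Metric.infDist_nonneg
        have ht' : (0:ℝ) < t := ht
        positivity
      have hneg : T v ≤ 0 := by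
        have h1 : Tendsto (fun t : ℝ => t⁻¹ * Metric.infDist (x + t • v) G) (𝓝[<] 0) (𝓝 (T v)) :=
          h.mono_left (nhdsWithin_mono _ fun t ht => ne_of_lt ht)
        refine le_of_tendsto h1 ?_
        filter_upwards [self_mem_nhdsWithin] with t ht
        have h2 : (0:ℝ) ≤ Metric.infDist (x + t • v) G := Metric.infDist_nonneg
        have ht' : t < 0 := ht
        exact mul_nonpos_of_nonpos_of_nonneg (inv_nonpos.mpr ht'.le) h2
      linarith
    rw [hTv] at h
    exact h
  -- the Lipschitz error term
  have hφe : ∀ t : ℝ, ‖φ (r + t) - (x + t • v)‖ ≤ (c : ℝ) * |t| := by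
    intro t
    have h1 := hlipc.dist_le_mul (r + t) r
    rw [dist_eq_norm] at h1
    have h2 : φ (r + t) - (r + t) • v - (φ r - r • v) = φ (r + t) - (x + t • v) := by
      rw [hr, add_smul]; abel
    rw [h2] at h1
    simpa [Real.dist_eq] using h1
  -- Step 2 : key estimate
  have key : ∀ η : ℝ, 0 < η → ∃ ε > 0, ∀ t : ℝ, 0 < |t| → |t| < ε →
      ‖f (φ (r + t)) - f (x + t • v)‖ ≤ (L * c + η) * |t| := by
    intro η hη
    set θ := η / (4 * L) with hθdef
    have hθ : 0 < θ := by positivity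
    rw [Metric.tendsto_nhdsWithin_nhds] at hsmall
    obtain ⟨ε₁, hε₁, hsm⟩ := hsmall θ hθ
    have hden : (0:ℝ) < 2*θ + c + 1 := by positivity
    refine ⟨min ε₁ (δ / (2*θ + c + 1)), lt_min hε₁ (by positivity), fun t ht htε => ?_⟩
    have ht0 : t ≠ 0 := abs_pos.mp ht
    have htε₁ : |t| < ε₁ := lt_of_lt_of_le htε (min_le_left _ _)
    have htδ : (2*θ + c + 1) * |t| < δ := by
      have h3 : |t| < δ / (2*θ + c + 1) := lt_of_lt_of_le htε (min_le_right _ _)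
      calc (2*θ+c+1)*|t| < (2*θ+c+1) * (δ / (2*θ+c+1)) := mul_lt_mul_of_pos_left h3 hden
        _ = δ := by field_simp
    have hdsmall : Metric.infDist (x + t • v) G < θ * |t| := by
      have h5 := hsm (x := t) (by simpa using ht0) (by simpa [Real.dist_eq] using htε₁)
      rw [Real.dist_eq, sub_zero] at h5
      have hd0 : 0 ≤ Metric.infDist (x + t • v) G := Metric.infDist_nonneg
      have heq : Metric.infDist (x + t • v) G = |t| * |t⁻¹ * Metric.infDist (x + t • v) G| := by
        rw [abs_mul, abs_inv, abs_of_nonneg hd0]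
        field_simp
      rw [heq, mul_comm θ |t|]
      exact mul_lt_mul_of_pos_left h5 ht
    have hdsmall2 : Metric.infDist (x + t • v) G < 2*θ * |t| := by nlinarith
    obtain ⟨y, hyG, hay⟩ := (Metric.infDist_lt_iff hGne).mp hdsmall2
    rw [dist_eq_norm] at hay
    have hby : ‖φ (r + t) - y‖ ≤ (c + 2*θ) * |t| := by
      calc ‖φ (r + t) - y‖ ≤ ‖φ (r + t) - (x + t • v)‖ + ‖(x + t • v) - y‖ :=
            norm_sub_le_norm_sub_add_norm_sub _ _ _
        _ ≤ c * |t| + 2*θ*|t| := add_le_add (hφe t) hay.le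
        _ = (c + 2*θ) * |t| := by ring
    have hδ1 : ‖φ (r + t) - y‖ < δ := lt_of_le_of_lt hby (by nlinarith)
    have hδ2 : ‖(x + t • v) - y‖ < δ :=
      lt_of_lt_of_le hay (by nlinarith [mul_nonneg (by positivity : (0:ℝ) ≤ (c:ℝ)+1) ht.le])
    have hf1 := hf y hyG (φ (r + t)) hδ1
    have hf2 := hf y hyG (x + t • v) hδ2
    have h4θ : 4 * L * θ = η := by rw [hθdef]; field_simp
    calc ‖f (φ (r + t)) - f (x + t • v)‖
        ≤ ‖f (φ (r + t)) - f y‖ + ‖f (x + t • v) - f y‖ := by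
          have := norm_sub_le_norm_sub_add_norm_sub (f (φ (r + t))) (f y) (f (x + t • v))
          simpa [norm_sub_rev (f y)] using this
      _ ≤ L * ‖φ (r + t) - y‖ + L * ‖(x + t • v) - y‖ := add_le_add hf1 hf2
      _ ≤ L * ((c + 2*θ) * |t|) + L * (2*θ*|t|) := by gcongr
      _ = (L * c + η) * |t| := by nlinarith [h4θ]
  -- Step 3 : main comparison
  have hmain : ∀ η : ℝ, 0 < η →
      oscDir f x v ≤ oscDir (f ∘ φ) r 1 + ENNReal.ofReal (2*(L*c+η)) := by
    intro η hη
    obtain ⟨ε, hε, hkey⟩ := key η hη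
    rw [← tsub_le_iff_right, oscDir_eq_iInf (f ∘ φ)]
    refine le_iInf₂ fun ε'' hε'' => ?_
    rw [tsub_le_iff_right]
    set ε3 := min ε'' ε with hε3def
    have hε3 : 0 < ε3 := lt_min hε'' hε
    refine le_trans (oscDir_le_oscSup f x v hε3) ?_
    refine le_trans ?_ (add_le_add_left (oscSup_mono (f ∘ φ) r 1 (min_le_left ε'' ε)) _)
    refine oscSup_le f x v fun t s ht ht' hs hs' => ?_
    have hq : ∀ u : ℝ, 0 < |u| → |u| < ε3 →
        ‖u⁻¹ • ((f ∘ φ) (r + u • (1:ℝ)) - (f ∘ φ) r) - u⁻¹ • (f (x + u • v) - f x)‖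
          ≤ L*c + η := by
      intro u hu hu'
      have h1 : r + u • (1:ℝ) = r + u := by simp
      have h2 : (f ∘ φ) r = f x := by simp [hr]
      rw [h1, h2]
      have h3 : u⁻¹ • (f (φ (r + u)) - f x) - u⁻¹ • (f (x + u • v) - f x)
          = u⁻¹ • (f (φ (r + u)) - f (x + u • v)) := by
        rw [← smul_sub]; congr 1; abel
      show ‖u⁻¹ • (f (φ (r + u)) - f x) - u⁻¹ • (f (x + u • v) - f x)‖ ≤ L*c + η
      rw [h3, norm_smul, norm_inv, Real.norm_eq_abs]
      calc |u|⁻¹ * ‖f (φ (r + u)) - f (x + u • v)‖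
          ≤ |u|⁻¹ * ((L*c+η)*|u|) := by
            gcongr
            exact hkey u hu (lt_of_lt_of_le hu' (min_le_right _ _))
        _ = L*c+η := by field_simp
    set Qφ : ℝ → Y := fun u => u⁻¹ • ((f ∘ φ) (r + u • (1:ℝ)) - (f ∘ φ) r) with hQφ
    set Qf : ℝ → Y := fun u => u⁻¹ • (f (x + u • v) - f x) with hQf
    have hcomb : ‖Qf t - Qf s‖ ≤ ‖Qφ t - Qφ s‖ + 2*(L*c+η) := by
      have e1 : Qf t - Qf s = (Qφ t - Qφ s) - (Qφ t - Qf t) + (Qφ s - Qf s) := by abel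
      calc ‖Qf t - Qf s‖ = ‖(Qφ t - Qφ s) - (Qφ t - Qf t) + (Qφ s - Qf s)‖ := by rw [e1]
        _ ≤ ‖(Qφ t - Qφ s) - (Qφ t - Qf t)‖ + ‖Qφ s - Qf s‖ := norm_add_le _ _
        _ ≤ ‖Qφ t - Qφ s‖ + ‖Qφ t - Qf t‖ + ‖Qφ s - Qf s‖ :=
            add_le_add_left (norm_sub_le _ _) _
        _ ≤ ‖Qφ t - Qφ s‖ + (L*c+η) + (L*c+η) :=
            add_le_add (add_le_add_right (hq t ht ht') _) (hq s hs hs')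
        _ = ‖Qφ t - Qφ s‖ + 2*(L*c+η) := by ring
    calc (‖Qf t - Qf s‖₊ : ℝ≥0∞) = ENNReal.ofReal ‖Qf t - Qf s‖ :=
          ((ofReal_norm _).trans (enorm_eq_nnnorm _)).symm
      _ ≤ ENNReal.ofReal (‖Qφ t - Qφ s‖ + 2*(L*c+η)) := ENNReal.ofReal_le_ofReal hcomb
      _ = (‖Qφ t - Qφ s‖₊ : ℝ≥0∞) + ENNReal.ofReal (2*(L*c+η)) := by
          rw [ENNReal.ofReal_add (norm_nonneg _) (by positivity), ((ofReal_norm _).trans (enorm_eq_nnnorm _))]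
      _ ≤ oscSup (f ∘ φ) r 1 ε3 + ENNReal.ofReal (2*(L*c+η)) :=
          add_le_add_left (le_oscSup (f ∘ φ) r 1 ht ht' hs hs') _
  -- Step 4 : ENNReal arithmetic
  have part1 : oscDir f x v / 4 ≤ oscDir (f ∘ φ) r 1 := by
    set K := oscDir f x v with hKdef
    set M := oscDir (f ∘ φ) r 1 with hMdef
    set A : ℝ≥0∞ := ENNReal.ofReal L * c with hA
    have hAne : A ≠ ⊤ := ENNReal.mul_ne_top ENNReal.ofReal_ne_top ENNReal.coe_ne_top
    have h8A : 8 * A < K := by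
      have h1 := (ENNReal.lt_div_iff_mul_lt (Or.inr ENNReal.coe_ne_top)
        (Or.inl (ENNReal.mul_ne_top (by norm_num) ENNReal.ofReal_ne_top))).mp hc
      calc 8 * A = (c : ℝ≥0∞) * (8 * ENNReal.ofReal L) := by rw [hA]; ring
        _ < K := h1
    have hCbound : ∀ η : ℝ, 0 < η →
        ENNReal.ofReal (2*(L*c+η)) ≤ 2*A + ENNReal.ofReal (2*η) := by
      intro η hη
      have e1 : (2:ℝ)*(L*c+η) = 2*(L*c) + 2*η := by ring
      rw [e1, ENNReal.ofReal_add (by positivity) (by positivity)]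
      refine add_le_add_left (le_of_eq ?_) _
      rw [ENNReal.ofReal_mul (by norm_num : (0:ℝ) ≤ 2), ENNReal.ofReal_mul hL.le,
        ENNReal.ofReal_coe_nnreal]
      norm_num [hA]
    have h2A : 2*A ≤ K/4 := by
      rw [ENNReal.le_div_iff_mul_le (Or.inl (by norm_num)) (Or.inl (by norm_num))]
      calc 2*A*4 = 8*A := by ring
        _ ≤ K := h8A.le
    by_contra hM
    push_neg at hM
    by_cases hKtop : K = ⊤
    · have h1 := hmain 1 one_pos
      have hMlt : M < ⊤ := hM.trans_le le_top
      have hlt : K < ⊤ := lt_of_le_of_lt h1 (ENNReal.add_lt_top.mpr ⟨hMlt, ENNReal.ofReal_lt_top⟩)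
      exact absurd hKtop hlt.ne
    · have hK4 : K/4 ≠ 0 := by
        rw [Ne, ENNReal.div_eq_zero_iff]
        rintro (h | h)
        · exact hK.ne' h
        · exact (by norm_num : (4:ℝ≥0∞) ≠ ⊤) h
      have hK4top : K/4 ≠ ⊤ := (ENNReal.div_lt_top hKtop (by norm_num)).ne
      set η := (K/4).toReal / 2 with hηdef
      have hηpos : 0 < η := by
        have := ENNReal.toReal_pos hK4 hK4top
        positivity
      have hE : ENNReal.ofReal (2*η) = K/4 := by
        rw [hηdef, show 2*((K/4).toReal/2) = (K/4).toReal by ring]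
        exact ENNReal.ofReal_toReal hK4top
      have hchain : K ≤ 3*(K/4) := by
        calc K ≤ M + ENNReal.ofReal (2*(L*c+η)) := hmain η hηpos
          _ ≤ K/4 + (2*A + ENNReal.ofReal (2*η)) := add_le_add hM.le (hCbound η hηpos)
          _ ≤ K/4 + (K/4 + K/4) := by
              rw [hE]; exact add_le_add_right (add_le_add_left h2A _) _
          _ = 3*(K/4) := by ring
      have hlt : 3*(K/4) < K := by
        have h44 : 4*(K/4) = K := ENNReal.mul_div_cancel (by norm_num) (by norm_num)
        calc 3*(K/4) < 4*(K/4) := (ENNReal.mul_lt_mul_iff_left hK4 hK4top).mpr (by norm_num)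
          _ = K := h44
      exact absurd hchain (not_le.mpr hlt)
  refine ⟨part1, fun hdiff => ?_⟩
  have h0 : oscDir (f ∘ φ) r 1 = 0 := oscDir_eq_zero_of_differentiableAt hdiff
  have h4 : oscDir f x v / 4 = 0 := le_antisymm (h0 ▸ part1) zero_le
  rcases ENNReal.div_eq_zero_iff.mp h4 with h | h
  · exact hK.ne' h
  · exact (by norm_num : (4:ℝ≥0∞) ≠ ⊤) h
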